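/- Let μ > 0 and ℏ > 0 be real constants and let F, G : ℝ → ℝ be continuous. Define recursively S⁰(u,v) = u/4 and Sⁿ(u,v) = u/4 + (μ/(2ℏ²)) ∫_0^u F(u') (∫_0^v G(v')·S^{n−1}(u',v') dv') du' for n ≥ 1. Then for every n ≥ 1 and all real u, v: Sⁿ(u,v) = u/4 + Σ_{k=1}^{n} (μ/(2ℏ²))^k · (1/((k−1)!)²) · (∫_0^v G(v')·G̃(v,v')^{k−1} dv') · (∫_0^u F(u')·(u'/4)·F̃(u,u')^{k−1} du'), where F̃(u,u') = ∫_{u'}^{u} F(s) ds and G̃(v,v') = ∫_{v'}^{v} G(s) ds. -/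

import Mathlib

open MeasureTheory Finset

noncomputable def pInt (F : ℝ → ℝ) (u : ℝ) : ℝ := ∫ s in (0:ℝ)..u, F s

lemma hasDerivAt_pInt {F : ℝ → ℝ} (hF : Continuous F) (u : ℝ) :
    HasDerivAt (pInt F) (F u) u :=
  intervalIntegral.integral_hasDerivAt_right (hF.intervalIntegrable _ _)
    (hF.stronglyMeasurableAtFilter _ _) hF.continuousAt

lemma cont_pInt {F : ℝ → ℝ} (hF : Continuous F) : Continuous (pInt F) :=
  continuous_iff_continuousAt.2 fun u => (hasDerivAt_pInt hF u).continuousAt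

lemma pInt_zero (F : ℝ → ℝ) : pInt F 0 = 0 := by simp [pInt]

noncomputable def mom (F : ℝ → ℝ) (i : ℕ) (u : ℝ) : ℝ :=
  ∫ w in (0:ℝ)..u, F w * (w / 4) * (pInt F w) ^ i

lemma cont_momInt {F : ℝ → ℝ} (hF : Continuous F) (i : ℕ) :
    Continuous (fun w => F w * (w / 4) * (pInt F w) ^ i) :=
  (hF.mul (continuous_id.div_const 4)).mul ((cont_pInt hF).pow i)

lemma hasDerivAt_mom {F : ℝ → ℝ} (hF : Continuous F) (i : ℕ) (u : ℝ) :
    HasDerivAt (mom F i) (F u * (u / 4) * (pInt F u) ^ i) u :=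
  intervalIntegral.integral_hasDerivAt_right ((cont_momInt hF i).intervalIntegrable _ _)
    ((cont_momInt hF i).stronglyMeasurableAtFilter _ _) (cont_momInt hF i).continuousAt

lemma cont_mom {F : ℝ → ℝ} (hF : Continuous F) (i : ℕ) : Continuous (mom F i) :=
  continuous_iff_continuousAt.2 fun u => (hasDerivAt_mom hF i u).continuousAt

lemma mom_zero (F : ℝ → ℝ) (i : ℕ) : mom F i 0 = 0 := by simp [mom]

noncomputable def Ex (F : ℝ → ℝ) (p : ℕ) (u : ℝ) : ℝ :=
  ∑ j ∈ Finset.range (p + 1),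
    (-1 : ℝ) ^ (j + p) * (pInt F u) ^ j * (p.choose j : ℝ) * mom F (p - j) u

lemma cont_Ex {F : ℝ → ℝ} (hF : Continuous F) (p : ℕ) : Continuous (Ex F p) := by
  unfold Ex
  exact continuous_finset_sum _ fun j _ =>
    ((continuous_const.mul ((cont_pInt hF).pow j)).mul continuous_const).mul (cont_mom hF _)

lemma Ex_zero (F : ℝ → ℝ) (p : ℕ) : Ex F p 0 = 0 := by simp [Ex, mom_zero]

lemma Ex_zero' (F : ℝ → ℝ) (u : ℝ) : Ex F 0 u = mom F 0 u := by simp [Ex]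

lemma expand {F : ℝ → ℝ} (hF : Continuous F) (p : ℕ) (u : ℝ) :
    (∫ u' in (0:ℝ)..u, F u' * (u' / 4) * (∫ s in u'..u, F s) ^ p) = Ex F p u := by
  have h1 : ∀ u' : ℝ, (∫ s in u'..u, F s) = pInt F u - pInt F u' := by
    intro u'
    rw [pInt, pInt, intervalIntegral.integral_interval_sub_left (hF.intervalIntegrable _ _)
      (hF.intervalIntegrable _ _)]
  calc (∫ u' in (0:ℝ)..u, F u' * (u' / 4) * (∫ s in u'..u, F s) ^ p)
      = ∫ u' in (0:ℝ)..u, ∑ j ∈ Finset.range (p+1),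
          ((-1:ℝ)^(j+p) * (pInt F u)^j * (p.choose j : ℝ)) *
            (F u' * (u'/4) * (pInt F u')^(p-j)) := by
        apply intervalIntegral.integral_congr
        intro u' _
        simp only [h1 u', sub_pow, Finset.mul_sum]
        exact Finset.sum_congr rfl fun j _ => by ring
    _ = ∑ j ∈ Finset.range (p+1), ∫ u' in (0:ℝ)..u,
          ((-1:ℝ)^(j+p) * (pInt F u)^j * (p.choose j : ℝ)) *
            (F u' * (u'/4) * (pInt F u')^(p-j)) := by
        apply intervalIntegral.integral_finset_sum
        intro j _
        exact (Continuous.intervalIntegrable (by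
          exact continuous_const.mul ((hF.mul (continuous_id.div_const 4)).mul
            ((cont_pInt hF).pow _))) _ _)
    _ = Ex F p u := by
        unfold Ex
        refine Finset.sum_congr rfl fun j _ => ?_
        rw [intervalIntegral.integral_const_mul, mom]

lemma hasDerivAt_Ex {F : ℝ → ℝ} (hF : Continuous F) (p : ℕ) (u : ℝ) :
    HasDerivAt (Ex F (p+1)) (((p:ℝ)+1) * (F u * Ex F p u)) u := by
  have H : HasDerivAt (fun x => ∑ j ∈ Finset.range (p+1+1),
      (-1:ℝ)^(j+(p+1)) * (pInt F x)^j * ((p+1).choose j : ℝ) * mom F (p+1-j) x)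
      (∑ j ∈ Finset.range (p+2),
        (((-1:ℝ)^(j+(p+1)) * ((j:ℝ) * (pInt F u)^(j-1) * F u)) * ((p+1).choose j : ℝ) *
          mom F (p+1-j) u +
         (-1:ℝ)^(j+(p+1)) * (pInt F u)^j * ((p+1).choose j : ℝ) *
          (F u * (u/4) * (pInt F u)^(p+1-j)))) u := by
    apply HasDerivAt.fun_sum
    intro j _
    exact ((((hasDerivAt_pInt hF u).pow j).const_mul ((-1:ℝ)^(j+(p+1)))).mul_const
      (((p+1).choose j : ℝ))).mul (hasDerivAt_mom hF (p+1-j) u)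
  have key : (∑ j ∈ Finset.range (p+2),
        (((-1:ℝ)^(j+(p+1)) * ((j:ℝ) * (pInt F u)^(j-1) * F u)) * ((p+1).choose j : ℝ) *
          mom F (p+1-j) u +
         (-1:ℝ)^(j+(p+1)) * (pInt F u)^j * ((p+1).choose j : ℝ) *
          (F u * (u/4) * (pInt F u)^(p+1-j)))) = ((p:ℝ)+1) * (F u * Ex F p u) := by
    rw [Finset.sum_add_distrib]
    have hB : (∑ j ∈ Finset.range (p+2),
        (-1:ℝ)^(j+(p+1)) * (pInt F u)^j * ((p+1).choose j : ℝ) *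
          (F u * (u/4) * (pInt F u)^(p+1-j))) = 0 := by
      have hcong : ∀ j ∈ Finset.range (p+2),
          (-1:ℝ)^(j+(p+1)) * (pInt F u)^j * ((p+1).choose j : ℝ) *
            (F u * (u/4) * (pInt F u)^(p+1-j))
          = (F u * (u/4) * (pInt F u)^(p+1) * (-1:ℝ)^(p+1)) *
            ((-1:ℝ)^j * ((p+1).choose j : ℝ)) := by
        intro j hj
        have hj' : j ≤ p + 1 := by have := Finset.mem_range.mp hj; omega
        have hpow : (pInt F u)^j * (pInt F u)^(p+1-j) = (pInt F u)^(p+1) := by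
          rw [← pow_add]; congr 1; omega
        rw [← hpow]; ring
      rw [Finset.sum_congr rfl hcong, ← Finset.mul_sum]
      have halt : ∑ j ∈ Finset.range (p+2), (-1:ℝ)^j * ((p+1).choose j : ℝ) = 0 := by
        have h := Int.alternating_sum_range_choose_of_ne (Nat.succ_ne_zero p)
        exact_mod_cast h
      rw [halt, mul_zero]
    rw [hB, add_zero]
    rw [Finset.sum_range_succ']
    have h0 : ((-1:ℝ)^(0+(p+1)) * (((0:ℕ):ℝ) * (pInt F u)^(0-1) * F u)) * ((p+1).choose 0 : ℝ) *
        mom F (p+1-0) u = 0 := by simp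
    rw [h0, add_zero]
    unfold Ex
    rw [Finset.mul_sum, Finset.mul_sum]
    refine Finset.sum_congr rfl fun i hi => ?_
    have hc : ((p+1).choose (i+1) : ℝ) * ((i:ℝ)+1) = ((p:ℝ)+1) * (p.choose i : ℝ) := by
      exact_mod_cast congrArg (Nat.cast : ℕ → ℝ) (Nat.add_one_mul_choose_eq p i).symm
    have hsub : p + 1 - (i + 1) = p - i := by omega
    rw [hsub]
    push_cast
    linear_combination ((-1:ℝ)^(i+p) * (pInt F u)^i * F u * mom F (p-i) u) * hc
  rw [key] at H
  exact H

lemma integral_Ex {F : ℝ → ℝ} (hF : Continuous F) (p : ℕ) (u : ℝ) :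
    (∫ u' in (0:ℝ)..u, F u' * Ex F p u') = Ex F (p+1) u / ((p:ℝ)+1) := by
  have hd : ∀ x ∈ Set.uIcc (0:ℝ) u,
      HasDerivAt (fun y => Ex F (p+1) y / ((p:ℝ)+1)) (F x * Ex F p x) x := by
    intro x _
    have h := (hasDerivAt_Ex hF p x).div_const ((p:ℝ)+1)
    have hne : ((p:ℝ)+1) ≠ 0 := by positivity
    have : ((p:ℝ)+1) * (F x * Ex F p x) / ((p:ℝ)+1) = F x * Ex F p x := by
      field_simp
    rwa [this] at h
  rw [intervalIntegral.integral_eq_sub_of_hasDerivAt hd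
    ((hF.mul (cont_Ex hF p)).intervalIntegrable _ _)]
  rw [Ex_zero, zero_div, sub_zero]

lemma integral_G_pow {G : ℝ → ℝ} (hG : Continuous G) (q : ℕ) (v : ℝ) :
    (∫ w in (0:ℝ)..v, G w * (∫ s in w..v, G s) ^ q)
      = (∫ s in (0:ℝ)..v, G s) ^ (q+1) / ((q:ℝ)+1) := by
  have hrw : ∀ w : ℝ, (∫ s in w..v, G s) = pInt G v - pInt G w := by
    intro w
    rw [pInt, pInt, intervalIntegral.integral_interval_sub_left (hG.intervalIntegrable _ _)
      (hG.intervalIntegrable _ _)]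
  simp only [hrw]
  have hd : ∀ x ∈ Set.uIcc (0:ℝ) v,
      HasDerivAt (fun w => -((pInt G v - pInt G w)^(q+1)) / ((q:ℝ)+1))
        (G x * (pInt G v - pInt G x)^q) x := by
    intro x _
    have h1 : HasDerivAt (fun w => pInt G v - pInt G w) (-(G x)) x :=
      (hasDerivAt_pInt hG x).const_sub _
    have h2 := ((h1.pow (q+1)).neg).div_const ((q:ℝ)+1)
    have hval : -(((q:ℕ)+1 : ℕ) * (pInt G v - pInt G x)^(q+1-1) * -(G x)) / ((q:ℝ)+1)
        = G x * (pInt G v - pInt G x)^q := by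
      have hne : ((q:ℝ)+1) ≠ 0 := by positivity
      push_cast
      field_simp
    rwa [hval] at h2
  have hi : IntervalIntegrable (fun w => G w * (pInt G v - pInt G w)^q) volume 0 v :=
    (hG.mul ((continuous_const.sub (cont_pInt hG)).pow q)).intervalIntegrable _ _
  rw [intervalIntegral.integral_eq_sub_of_hasDerivAt hd hi]
  rw [pInt_zero, sub_self, sub_zero]
  simp [zero_pow, neg_div]

lemma integral_G_pow' {G : ℝ → ℝ} (hG : Continuous G) (k : ℕ) (v : ℝ) :
    (∫ w in (0:ℝ)..v, G w * (pInt G w) ^ k) = (pInt G v) ^ (k+1) / ((k:ℝ)+1) := by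
  have hd : ∀ x ∈ Set.uIcc (0:ℝ) v,
      HasDerivAt (fun w => (pInt G w)^(k+1) / ((k:ℝ)+1)) (G x * (pInt G x)^k) x := by
    intro x _
    have h2 := (((hasDerivAt_pInt hG x).pow (k+1))).div_const ((k:ℝ)+1)
    have hval : (((k:ℕ)+1 : ℕ) * (pInt G x)^(k+1-1) * G x) / ((k:ℝ)+1)
        = G x * (pInt G x)^k := by
      have hne : ((k:ℝ)+1) ≠ 0 := by positivity
      push_cast
      field_simp
    rwa [hval] at h2
  have hi : IntervalIntegrable (fun w => G w * (pInt G w)^k) volume 0 v :=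
    (hG.mul ((cont_pInt hG).pow k)).intervalIntegrable _ _
  rw [intervalIntegral.integral_eq_sub_of_hasDerivAt hd hi]
  rw [pInt_zero]
  simp [zero_pow]

lemma Icc_shift (n : ℕ) (h : ℕ → ℝ) :
    ∑ k ∈ Finset.Icc 1 (n+1), h k = h 1 + ∑ k ∈ Finset.Icc 1 n, h (k+1) := by
  induction n with
  | zero => simp
  | succ m ihm =>
      rw [Finset.sum_Icc_succ_top (by omega : 1 ≤ m+1+1), ihm,
        Finset.sum_Icc_succ_top (by omega : 1 ≤ m+1), add_assoc]

theorem stmt7 (μ hbar : ℝ) (hμ : 0 < μ) (hhbar : 0 < hbar)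
    (F G : ℝ → ℝ) (hF : Continuous F) (hG : Continuous G)
    (S : ℕ → ℝ → ℝ → ℝ)
    (hS0 : ∀ u v : ℝ, S 0 u v = u / 4)
    (hSn : ∀ (n : ℕ) (u v : ℝ), S (n + 1) u v =
      u / 4 + μ / (2 * hbar ^ 2) *
        ∫ u' in (0:ℝ)..u, F u' * ∫ v' in (0:ℝ)..v, G v' * S n u' v') :
    ∀ n : ℕ, 1 ≤ n → ∀ u v : ℝ,
      S n u v = u / 4 + ∑ k ∈ Finset.Icc 1 n,
        (μ / (2 * hbar ^ 2)) ^ k * (1 / ((k - 1).factorial : ℝ) ^ 2) *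
          (∫ v' in (0:ℝ)..v, G v' * (∫ s in v'..v, G s) ^ (k - 1)) *
          (∫ u' in (0:ℝ)..u, F u' * (u' / 4) * (∫ s in u'..u, F s) ^ (k - 1)) := by
  set c := μ / (2 * hbar ^ 2) with hc
  have clean : ∀ n : ℕ, 1 ≤ n → ∀ u v : ℝ, S n u v = u/4 + ∑ k ∈ Finset.Icc 1 n,
      c^k * (1/((k-1).factorial:ℝ)^2) * ((pInt G v)^k/(k:ℝ)) * Ex F (k-1) u := by
    intro n hn
    induction n, hn using Nat.le_induction with
    | base =>
      intro u v
      have h01 : S 1 u v = u / 4 + c *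
          ∫ u' in (0:ℝ)..u, F u' * ∫ v' in (0:ℝ)..v, G v' * S 0 u' v' := hSn 0 u v
      rw [h01]
      simp only [hS0]
      have hIv : ∀ u' : ℝ, (∫ v' in (0:ℝ)..v, G v' * (u'/4)) = pInt G v * (u'/4) := by
        intro u'
        rw [intervalIntegral.integral_mul_const, pInt]
      simp only [hIv]
      have hfun : (fun u' => F u' * (pInt G v * (u'/4)))
          = fun u' => pInt G v * (F u' * (u'/4) * (pInt F u')^0) := by
        funext x; ring
      rw [hfun, intervalIntegral.integral_const_mul, ← mom]
      rw [Finset.Icc_self, Finset.sum_singleton, Ex_zero']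
      norm_num [Nat.factorial]
      ring
    | succ n hn ih =>
      intro u v
      rw [hSn n u v]
      have hinner : ∀ u' : ℝ, (∫ v' in (0:ℝ)..v, G v' * S n u' v')
          = (u'/4) * pInt G v + ∑ k ∈ Finset.Icc 1 n,
              (c^k * (1/((k-1).factorial:ℝ)^2) * Ex F (k-1) u' / (k:ℝ)) *
                ((pInt G v)^(k+1)/((k:ℝ)+1)) := by
        intro u'
        have hfun : (fun v' => G v' * S n u' v')
            = fun v' => G v' * (u'/4) + ∑ k ∈ Finset.Icc 1 n,
                (c^k * (1/((k-1).factorial:ℝ)^2) * Ex F (k-1) u' / (k:ℝ)) *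
                  (G v' * (pInt G v')^k) := by
          funext v'
          rw [ih u' v', mul_add, Finset.mul_sum]
          congr 1
          exact Finset.sum_congr rfl fun k hk => by ring
        have hi1 : IntervalIntegrable (fun v' : ℝ => G v' * (u'/4)) volume 0 v :=
          (hG.mul continuous_const).intervalIntegrable _ _
        have hi2 : IntervalIntegrable (fun v' : ℝ => ∑ k ∈ Finset.Icc 1 n,
            (c^k * (1/((k-1).factorial:ℝ)^2) * Ex F (k-1) u' / (k:ℝ)) *
              (G v' * (pInt G v')^k)) volume 0 v :=
          (continuous_finset_sum _ fun k _ => continuous_const.mul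
            (hG.mul ((cont_pInt hG).pow k))).intervalIntegrable _ _
        have hi3 : ∀ k ∈ Finset.Icc 1 n, IntervalIntegrable (fun v' : ℝ =>
            (c^k * (1/((k-1).factorial:ℝ)^2) * Ex F (k-1) u' / (k:ℝ)) *
              (G v' * (pInt G v')^k)) volume 0 v := fun k _ =>
          (continuous_const.mul (hG.mul ((cont_pInt hG).pow k))).intervalIntegrable _ _
        rw [hfun, intervalIntegral.integral_add hi1 hi2,
          intervalIntegral.integral_finset_sum hi3]
        congr 1
        · rw [intervalIntegral.integral_mul_const, mul_comm, pInt]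
        · refine Finset.sum_congr rfl fun k hk => ?_
          rw [intervalIntegral.integral_const_mul, integral_G_pow' hG k v]
      simp only [hinner]
      have hfun2 : (fun u' => F u' * ((u'/4) * pInt G v + ∑ k ∈ Finset.Icc 1 n,
              (c^k * (1/((k-1).factorial:ℝ)^2) * Ex F (k-1) u' / (k:ℝ)) *
                ((pInt G v)^(k+1)/((k:ℝ)+1))))
          = fun u' => pInt G v * (F u' * (u'/4) * (pInt F u')^0)
            + ∑ k ∈ Finset.Icc 1 n,
              (c^k * (1/((k-1).factorial:ℝ)^2) * ((pInt G v)^(k+1)/((k:ℝ)+1)) / (k:ℝ)) *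
                (F u' * Ex F (k-1) u') := by
        funext x
        rw [mul_add, Finset.mul_sum]
        congr 1
        · ring
        · exact Finset.sum_congr rfl fun k hk => by ring
      have hj1 : IntervalIntegrable (fun u' : ℝ =>
          pInt G v * (F u' * (u'/4) * (pInt F u')^0)) volume 0 u :=
        (continuous_const.mul ((hF.mul (continuous_id.div_const 4)).mul
          ((cont_pInt hF).pow 0))).intervalIntegrable _ _
      have hj2 : IntervalIntegrable (fun u' : ℝ => ∑ k ∈ Finset.Icc 1 n,
          (c^k * (1/((k-1).factorial:ℝ)^2) * ((pInt G v)^(k+1)/((k:ℝ)+1)) / (k:ℝ)) *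
            (F u' * Ex F (k-1) u')) volume 0 u :=
        (continuous_finset_sum _ fun k _ => continuous_const.mul
          (hF.mul (cont_Ex hF (k-1)))).intervalIntegrable _ _
      have hj3 : ∀ k ∈ Finset.Icc 1 n, IntervalIntegrable (fun u' : ℝ =>
          (c^k * (1/((k-1).factorial:ℝ)^2) * ((pInt G v)^(k+1)/((k:ℝ)+1)) / (k:ℝ)) *
            (F u' * Ex F (k-1) u')) volume 0 u := fun k _ =>
        (continuous_const.mul (hF.mul (cont_Ex hF (k-1)))).intervalIntegrable _ _
      rw [hfun2, intervalIntegral.integral_add hj1 hj2,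
        intervalIntegral.integral_finset_sum hj3]
      rw [intervalIntegral.integral_const_mul, ← mom]
      have hsum : ∀ k ∈ Finset.Icc 1 n,
          (∫ u' in (0:ℝ)..u,
            (c^k * (1/((k-1).factorial:ℝ)^2) * ((pInt G v)^(k+1)/((k:ℝ)+1)) / (k:ℝ)) *
              (F u' * Ex F (k-1) u'))
          = (c^k * (1/((k-1).factorial:ℝ)^2) * ((pInt G v)^(k+1)/((k:ℝ)+1)) / (k:ℝ)) *
            (Ex F k u / (k:ℝ)) := by
        intro k hk
        have hk1 : 1 ≤ k := (Finset.mem_Icc.mp hk).1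
        rw [intervalIntegral.integral_const_mul, integral_Ex hF (k-1) u]
        congr 2
        · congr 1; omega
        · rw [Nat.cast_sub hk1]; push_cast; ring
      rw [Finset.sum_congr rfl hsum, Icc_shift]
      have h1 : c^1 * (1/((1-1).factorial:ℝ)^2) * ((pInt G v)^1/((1:ℕ):ℝ)) * Ex F (1-1) u
          = c * (pInt G v * mom F 0 u) := by
        norm_num [Nat.factorial]
        rw [Ex_zero']
        ring
      rw [mul_add, Finset.mul_sum, ← add_assoc, h1, ← add_assoc]
      congr 1
      refine Finset.sum_congr rfl fun k hk => ?_
      have hk1 : 1 ≤ k := (Finset.mem_Icc.mp hk).1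
      have hk0 : ((k:ℝ)) ≠ 0 := by positivity
      have hfac : ((k.factorial:ℝ)) = (k:ℝ) * (((k-1).factorial:ℝ)) := by
        exact_mod_cast (Nat.mul_factorial_pred (by omega : k ≠ 0)).symm
      have hfacne : (((k-1).factorial:ℝ)) ≠ 0 := by positivity
      have hsub : k + 1 - 1 = k := by omega
      rw [hsub, hfac]
      push_cast
      field_simp
      ring
  intro n hn u v
  rw [clean n hn u v]
  congr 1
  refine Finset.sum_congr rfl fun k hk => ?_
  have hk1 : 1 ≤ k := (Finset.mem_Icc.mp hk).1
  rw [expand hF (k-1) u, integral_G_pow hG (k-1) v]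
  have h1 : (k-1)+1 = k := by omega
  have h2 : (((k-1:ℕ)):ℝ)+1 = (k:ℝ) := by
    rw [Nat.cast_sub hk1]; push_cast; ring
  rw [h1, h2]
  simp only [pInt]
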